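/- For every integer k ≥ 1, the rhombus of side length k (the simple grid polygon with vertices 0, k·(1,0), k·(1,0) + k·(1/2, √3/2), and k·(1/2, √3/2)) has perimeter 4k and its billiards permutation consists of exactly k cycles, each of length 4; in particular cyc = k = ⌊(perim + 2)/4⌋. -/

import Mathlib

/-!
Formalization of triangular-grid billiards (Defant–Jiradilok) for simple grid polygons.

Lattice coordinates: the pair `(a, b) : ℤ × ℤ` represents the planar point
`a•(1,0) + b•(1/2, √3/2)` of the triangular grid.
-/

noncomputable section
open scoped Classical

/-- Lattice coordinates for vertices of the triangular grid. -/
abbrev GridV : Type := ℤ × ℤ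

/-- The planar position of a lattice point. -/
def toPlane (v : GridV) : ℝ × ℝ :=
  ((v.1 : ℝ) + (v.2 : ℝ) / 2, (v.2 : ℝ) * Real.sqrt 3 / 2)

/-- A pane (side of a grid cell).  `dir = 0` : the unit segment from `base` to `base + (1,0)`
(making a 0° angle with the positive x-axis); `dir = 1` : to `base + (0,1)` (60°);
`dir = 2` : to `base + (-1,1)` (120°). -/
structure TPane where
  base : GridV
  dir : ZMod 3
deriving DecidableEq

/-- The second endpoint of a pane. -/
def TPane.head (p : TPane) : GridV :=
  p.base + (if p.dir = 0 then ((1 : ℤ), (0 : ℤ)) else if p.dir = 1 then (0, 1) else (-1, 1))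

/-- The closed unit segment in the plane corresponding to a pane. -/
def TPane.seg (p : TPane) : Set (ℝ × ℝ) := segment ℝ (toPlane p.base) (toPlane p.head)

/-- A unit grid triangle.  An upward triangle with base point `v` has vertices
`v, v+(1,0), v+(0,1)`; a downward one has vertices `v+(1,0), v+(0,1), v+(1,1)`. -/
structure TCell where
  base : GridV
  up : Bool
deriving DecidableEq

def TCell.vertices (c : TCell) : Finset GridV :=
  if c.up then {c.base, c.base + (1, 0), c.base + (0, 1)}
  else {c.base + (1, 0), c.base + (0, 1), c.base + (1, 1)}

/-- The closed triangular region of a grid cell in the plane. -/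
def TCell.region (c : TCell) : Set (ℝ × ℝ) := convexHull ℝ ↑(c.vertices.image toPlane)

/-- The edge of a cell with a given label: `0` = horizontal, `1` = at 60°, `2` = at 120°. -/
def TCell.edge (c : TCell) (i : ZMod 3) : TPane :=
  if c.up then
    (if i = 0 then ⟨c.base, 0⟩ else if i = 1 then ⟨c.base, 1⟩ else ⟨c.base + (1, 0), 2⟩)
  else
    (if i = 0 then ⟨c.base + (0, 1), 0⟩ else if i = 1 then ⟨c.base + (1, 0), 1⟩
     else ⟨c.base + (1, 0), 2⟩)

/-- The upward triangle adjacent to a pane. -/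
def TPane.upCell (p : TPane) : TCell :=
  if p.dir = 2 then ⟨p.base - (1, 0), true⟩ else ⟨p.base, true⟩

/-- The downward triangle adjacent to a pane. -/
def TPane.downCell (p : TPane) : TCell :=
  if p.dir = 0 then ⟨p.base - (0, 1), false⟩ else ⟨p.base - (1, 0), false⟩

/-- The planar region covered by a set of grid cells. -/
def polyRegion (P : Finset TCell) : Set (ℝ × ℝ) := ⋃ c ∈ P, c.region

/-- A simple grid polygon, identified with the (nonempty) finite set of unit grid triangles it
contains; its region must be homeomorphic to a closed disk. -/
def IsSimpleGridPolygon (P : Finset TCell) : Prop :=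
  P.Nonempty ∧ Nonempty (↥(polyRegion P) ≃ₜ ↥(Metric.closedBall (0 : ℝ × ℝ) 1))

/-- A pane is a boundary pane of `P` when exactly one of the two cells adjacent to it
belongs to `P`. -/
def IsBoundaryPane (P : Finset TCell) (p : TPane) : Prop :=
  (p.upCell ∈ P ∧ p.downCell ∉ P) ∨ (p.upCell ∉ P ∧ p.downCell ∈ P)

/-- The finite set of boundary panes of `P`. -/
def boundaryPanes (P : Finset TCell) : Finset TPane :=
  (P.biUnion fun c => {c.edge 0, c.edge 1, c.edge 2}).filter (IsBoundaryPane P)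

/-- The perimeter of `P`: the number of its boundary panes. -/
def perim (P : Finset TCell) : ℕ := (boundaryPanes P).card

/-- A pane is an interior pane of `P` when both adjacent cells belong to `P`. -/
def IsInteriorPane (P : Finset TCell) (p : TPane) : Prop := p.upCell ∈ P ∧ p.downCell ∈ P

/-- The cell of `P` into which the beam emitted from a boundary pane `p` travels. -/
def startCell (P : Finset TCell) (p : TPane) : TCell :=
  if p.upCell ∈ P then p.upCell else p.downCell

/-- The other cell adjacent to the pane `p`. -/
def nextCell (p : TPane) (c : TCell) : TCell := if c = p.upCell then p.downCell else p.upCell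

/-- One step of the billiards process.  A state `(p, c)` records that the beam has just crossed
(or been emitted from, or reflected at) the pane `p` heading into the cell `c`.
Inside an upward cell a beam entering through the edge labeled `i` exits through the edge
labeled `i - 1` (mod 3); inside a downward cell, through the edge labeled `i + 1`.  At a
boundary pane it reflects back into the same cell; at an interior pane it crosses into
the adjacent cell. -/
def bStep (P : Finset TCell) (st : TPane × TCell) : TPane × TCell :=
  let q := st.2.edge (if st.2.up then st.1.dir - 1 else st.1.dir + 1)
  if IsBoundaryPane P q then (q, st.2) else (q, nextCell q st.2)

/-- `BeamTo P b b'` : the beam emitted from the midpoint of the boundary pane `b` first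
reaches the boundary of `P` again at the pane `b'`. -/
def BeamTo (P : Finset TCell) (b b' : TPane) : Prop :=
  ∃ k : ℕ, 0 < k ∧ IsBoundaryPane P b' ∧ ((bStep P)^[k] (b, startCell P b)).1 = b' ∧
    ∀ m : ℕ, 0 < m → m < k → ¬ IsBoundaryPane P (((bStep P)^[m] (b, startCell P b)).1)

/-- `π` is the billiards permutation of the grid polygon `P`. -/
def IsBilliards (P : Finset TCell) (π : Equiv.Perm ↥(boundaryPanes P)) : Prop :=
  ∀ b : ↥(boundaryPanes P), BeamTo P b.1 (π b).1

/-- The orbits (cycles) of a permutation of a finite type, as a finite set of finite sets. -/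
def permOrbits {α : Type*} [Fintype α] [DecidableEq α] (π : Equiv.Perm α) :
    Finset (Finset α) :=
  Finset.univ.image fun a => Finset.univ.filter fun b => π.SameCycle a b

/-- The number of cycles of a permutation; for a billiards permutation this is the number of
distinct light-beam trajectories. -/
def cycCount {α : Type*} [Fintype α] [DecidableEq α] (π : Equiv.Perm α) : ℕ :=
  (permOrbits π).card

/-- `P` is primitive: no interior pane cuts `P` into two disconnected regions. -/
def IsPrimitive (P : Finset TCell) : Prop :=
  ∀ p : TPane, IsInteriorPane P p → IsPreconnected (polyRegion P \ p.seg)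


/-- The rhombus of side length `k`, with vertices `0`, `k•(1,0)`, `k•(1,0) + k•(1/2,√3/2)` and
`k•(1/2,√3/2)` (in lattice coordinates the cells with base point in `[0,k)²`). -/
def rhombus (k : ℕ) : Finset TCell :=
  ((Finset.range k ×ˢ Finset.range k).image fun ab =>
    (⟨((ab.1 : ℤ), (ab.2 : ℤ)), true⟩ : TCell)) ∪
  ((Finset.range k ×ˢ Finset.range k).image fun ab =>
    (⟨((ab.1 : ℤ), (ab.2 : ℤ)), false⟩ : TCell))

/-! ### Auxiliary development -/

lemma mem_rhombus {k : ℕ} {c : TCell} :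
    c ∈ rhombus k ↔ 0 ≤ c.base.1 ∧ c.base.1 < k ∧ 0 ≤ c.base.2 ∧ c.base.2 < k := by
  obtain ⟨⟨a, b⟩, u⟩ := c
  simp only [rhombus, Finset.mem_union, Finset.mem_image, Finset.mem_product,
    Finset.mem_range, TCell.mk.injEq, Prod.mk.injEq, Prod.exists]
  constructor
  · rintro (⟨x, y, ⟨hx, hy⟩, ⟨rfl, rfl⟩, rfl⟩ | ⟨x, y, ⟨hx, hy⟩, ⟨rfl, rfl⟩, rfl⟩) <;>
      simp <;> omega
  · rintro ⟨h1, h2, h3, h4⟩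
    cases u
    · exact Or.inr ⟨a.toNat, b.toNat, ⟨by omega, by omega⟩, ⟨by omega, by omega⟩, rfl⟩
    · exact Or.inl ⟨a.toNat, b.toNat, ⟨by omega, by omega⟩, ⟨by omega, by omega⟩, rfl⟩

lemma mem_rhombus' {k : ℕ} {a b : ℤ} {u : Bool} :
    (⟨(a, b), u⟩ : TCell) ∈ rhombus k ↔ 0 ≤ a ∧ a < k ∧ 0 ≤ b ∧ b < k := mem_rhombus

lemma zmod3_cases (d : ZMod 3) : d = 0 ∨ d = 1 ∨ d = 2 := by fin_cases d <;> [exact Or.inl rfl; exact Or.inr (Or.inl rfl); exact Or.inr (Or.inr rfl)]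

lemma isBoundary_iff {k : ℕ} {p : TPane} :
    IsBoundaryPane (rhombus k) p ↔
      (p.dir = 0 ∧ 0 ≤ p.base.1 ∧ p.base.1 < k ∧ (p.base.2 = 0 ∨ p.base.2 = k)) ∨
      (p.dir = 1 ∧ 0 ≤ p.base.2 ∧ p.base.2 < k ∧ (p.base.1 = 0 ∨ p.base.1 = k)) := by
  obtain ⟨⟨a, b⟩, d⟩ := p
  rcases zmod3_cases d with rfl | rfl | rfl <;>
    simp +decide [IsBoundaryPane, TPane.upCell, TPane.downCell, mem_rhombus', Prod.ext_iff] <;>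
    omega

/-- The explicit boundary of the rhombus. -/
def Bset (k : ℕ) : Finset TPane :=
  (((Finset.range k).image fun a : ℕ => (⟨((a : ℤ), 0), 0⟩ : TPane)) ∪
   ((Finset.range k).image fun a : ℕ => (⟨((a : ℤ), (k : ℤ)), 0⟩ : TPane))) ∪
  (((Finset.range k).image fun b : ℕ => (⟨((k : ℤ), (b : ℤ)), 1⟩ : TPane)) ∪
   ((Finset.range k).image fun b : ℕ => (⟨(0, (b : ℤ)), 1⟩ : TPane)))

lemma mem_Bset {k : ℕ} {p : TPane} :
    p ∈ Bset k ↔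
      (p.dir = 0 ∧ 0 ≤ p.base.1 ∧ p.base.1 < k ∧ (p.base.2 = 0 ∨ p.base.2 = k)) ∨
      (p.dir = 1 ∧ 0 ≤ p.base.2 ∧ p.base.2 < k ∧ (p.base.1 = 0 ∨ p.base.1 = k)) := by
  obtain ⟨⟨a, b⟩, d⟩ := p
  simp only [Bset, Finset.mem_union, Finset.mem_image, Finset.mem_range, TPane.mk.injEq,
    Prod.mk.injEq]
  constructor
  · rintro ((⟨x, hx, ⟨rfl, rfl⟩, rfl⟩ | ⟨x, hx, ⟨rfl, rfl⟩, rfl⟩) |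
      (⟨x, hx, ⟨rfl, rfl⟩, rfl⟩ | ⟨x, hx, ⟨rfl, rfl⟩, rfl⟩))
    · exact Or.inl ⟨rfl, by omega, by omega, by omega⟩
    · exact Or.inl ⟨rfl, by omega, by omega, by omega⟩
    · exact Or.inr ⟨rfl, by omega, by omega, by omega⟩
    · exact Or.inr ⟨rfl, by omega, by omega, by omega⟩
  · rintro (⟨rfl, h1, h2, rfl | rfl⟩ | ⟨rfl, h1, h2, rfl | rfl⟩)
    · exact Or.inl (Or.inl ⟨a.toNat, by omega, ⟨⟨by omega, rfl⟩, rfl⟩⟩)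
    · exact Or.inl (Or.inr ⟨a.toNat, by omega, ⟨⟨by omega, rfl⟩, rfl⟩⟩)
    · exact Or.inr (Or.inr ⟨b.toNat, by omega, ⟨⟨rfl, by omega⟩, rfl⟩⟩)
    · exact Or.inr (Or.inl ⟨b.toNat, by omega, ⟨⟨rfl, by omega⟩, rfl⟩⟩)

lemma isBoundary_iff_mem_Bset {k : ℕ} {p : TPane} :
    IsBoundaryPane (rhombus k) p ↔ p ∈ Bset k := by
  rw [isBoundary_iff, mem_Bset]

lemma boundaryPanes_rhombus {k : ℕ} (hk : 1 ≤ k) :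
    boundaryPanes (rhombus k) = Bset k := by
  ext p
  simp only [boundaryPanes, Finset.mem_filter, Finset.mem_biUnion]
  constructor
  · rintro ⟨-, hb⟩; exact isBoundary_iff_mem_Bset.1 hb
  · intro hp
    refine ⟨?_, isBoundary_iff_mem_Bset.2 hp⟩
    rcases mem_Bset.1 hp with ⟨hd, h1, h2, h3 | h3⟩ | ⟨hd, h1, h2, h3 | h3⟩ <;>
      obtain ⟨⟨a, b⟩, d⟩ := p <;> simp only at hd h1 h2 h3 <;> subst hd <;> subst h3
    · exact ⟨⟨(a, 0), true⟩, mem_rhombus'.2 (by omega),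
        by simp +decide [TCell.edge, Prod.ext_iff]⟩
    · exact ⟨⟨(a, (k : ℤ) - 1), false⟩, mem_rhombus'.2 (by omega),
        by simp +decide [TCell.edge, Prod.ext_iff]⟩
    · exact ⟨⟨(0, b), true⟩, mem_rhombus'.2 (by omega),
        by simp +decide [TCell.edge, Prod.ext_iff]⟩
    · exact ⟨⟨((k : ℤ) - 1, b), false⟩, mem_rhombus'.2 (by omega),
        by simp +decide [TCell.edge, Prod.ext_iff]⟩

lemma card_Bset {k : ℕ} (hk : 1 ≤ k) : (Bset k).card = 4 * k := by
  classical
  set A := (Finset.range k).image fun a : ℕ => (⟨((a : ℤ), 0), 0⟩ : TPane) with hA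
  set B := (Finset.range k).image fun a : ℕ => (⟨((a : ℤ), (k : ℤ)), 0⟩ : TPane) with hB
  set C := (Finset.range k).image fun b : ℕ => (⟨((k : ℤ), (b : ℤ)), 1⟩ : TPane) with hC
  set D := (Finset.range k).image fun b : ℕ => (⟨(0, (b : ℤ)), 1⟩ : TPane) with hD
  have dAB : Disjoint A B := by
    simp only [hA, hB, Finset.disjoint_left, Finset.mem_image, Finset.mem_range]
    rintro p ⟨x, hx, rfl⟩ ⟨y, hy, h⟩
    simp only [TPane.mk.injEq, Prod.mk.injEq] at h
    omega
  have dCD : Disjoint C D := by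
    simp only [hC, hD, Finset.disjoint_left, Finset.mem_image, Finset.mem_range]
    rintro p ⟨x, hx, rfl⟩ ⟨y, hy, h⟩
    simp only [TPane.mk.injEq, Prod.mk.injEq] at h
    omega
  have dbig : Disjoint (A ∪ B) (C ∪ D) := by
    simp only [hA, hB, hC, hD, Finset.disjoint_left, Finset.mem_union, Finset.mem_image,
      Finset.mem_range]
    rintro p (⟨x, hx, rfl⟩ | ⟨x, hx, rfl⟩) (⟨y, hy, h⟩ | ⟨y, hy, h⟩) <;>
      simp only [TPane.mk.injEq, Prod.mk.injEq] at h <;> exact absurd h.2 (by decide)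
  have cA : A.card = k := by
    rw [hA, Finset.card_image_of_injective, Finset.card_range]
    intro x y h; simpa using h
  have cB : B.card = k := by
    rw [hB, Finset.card_image_of_injective, Finset.card_range]
    intro x y h; simpa using h
  have cC : C.card = k := by
    rw [hC, Finset.card_image_of_injective, Finset.card_range]
    intro x y h; simpa using h
  have cD : D.card = k := by
    rw [hD, Finset.card_image_of_injective, Finset.card_range]
    intro x y h; simpa using h
  rw [Bset]
  rw [Finset.card_union_of_disjoint dbig, Finset.card_union_of_disjoint dAB,
    Finset.card_union_of_disjoint dCD, cA, cB, cC, cD]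
  ring

lemma perim_rhombus {k : ℕ} (hk : 1 ≤ k) : perim (rhombus k) = 4 * k := by
  rw [perim, boundaryPanes_rhombus hk, card_Bset hk]


/-! ### Beam dynamics helpers -/

lemma bStep_of_not_boundary {P : Finset TCell} {p q : TPane} {c : TCell}
    (h : c.edge (if c.up then p.dir - 1 else p.dir + 1) = q) (hq : ¬ IsBoundaryPane P q) :
    bStep P (p, c) = (q, nextCell q c) := by
  unfold bStep
  simp only [h, if_neg hq]

lemma bStep_of_boundary {P : Finset TCell} {p q : TPane} {c : TCell}
    (h : c.edge (if c.up then p.dir - 1 else p.dir + 1) = q) (hq : IsBoundaryPane P q) :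
    bStep P (p, c) = (q, c) := by
  unfold bStep
  simp only [h, if_pos hq]

lemma not_boundary_dir2 {k : ℕ} (v : GridV) : ¬ IsBoundaryPane (rhombus k) ⟨v, 2⟩ := by
  rw [isBoundary_iff]; simp +decide

lemma boundary_dir0 {k : ℕ} {a b : ℤ} (h : 0 ≤ a ∧ a < k ∧ (b = 0 ∨ b = k)) :
    IsBoundaryPane (rhombus k) ⟨(a, b), 0⟩ := by
  rw [isBoundary_iff]; exact Or.inl ⟨rfl, h.1, h.2.1, h.2.2⟩

lemma not_boundary_dir0 {k : ℕ} {a b : ℤ} (h : ¬(0 ≤ a ∧ a < k ∧ (b = 0 ∨ b = k))) :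
    ¬ IsBoundaryPane (rhombus k) ⟨(a, b), 0⟩ := by
  rw [isBoundary_iff]; simp +decide; omega

lemma boundary_dir1 {k : ℕ} {a b : ℤ} (h : 0 ≤ b ∧ b < k ∧ (a = 0 ∨ a = k)) :
    IsBoundaryPane (rhombus k) ⟨(a, b), 1⟩ := by
  rw [isBoundary_iff]; exact Or.inr ⟨rfl, h.1, h.2.1, h.2.2⟩

lemma not_boundary_dir1 {k : ℕ} {a b : ℤ} (h : ¬(0 ≤ b ∧ b < k ∧ (a = 0 ∨ a = k))) :
    ¬ IsBoundaryPane (rhombus k) ⟨(a, b), 1⟩ := by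
  rw [isBoundary_iff]; simp +decide; omega

/-- Steps of the upward beam from a bottom pane. -/
lemma bt_step1 {k : ℕ} {a : ℤ} (n : ℤ) :
    bStep (rhombus k) (⟨(a, n), 0⟩, ⟨(a, n), true⟩) = (⟨(a + 1, n), 2⟩, ⟨(a, n), false⟩) := by
  rw [bStep_of_not_boundary (q := ⟨(a + 1, n), 2⟩) (by simp +decide [TCell.edge])
    (not_boundary_dir2 _)]
  simp +decide [nextCell, TPane.upCell, TPane.downCell, Prod.ext_iff]

lemma bt_step2 {k : ℕ} {a n : ℤ} (hn : 0 ≤ n) (hnk : n + 1 < k) :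
    bStep (rhombus k) (⟨(a + 1, n), 2⟩, ⟨(a, n), false⟩) =
      (⟨(a, n + 1), 0⟩, ⟨(a, n + 1), true⟩) := by
  rw [bStep_of_not_boundary (q := ⟨(a, n + 1), 0⟩) (by simp +decide [TCell.edge])
    (not_boundary_dir0 (by omega))]
  simp +decide [nextCell, TPane.upCell, TPane.downCell, Prod.ext_iff]

lemma iter_bt {k : ℕ} {a : ℤ} :
    ∀ j : ℕ, (j : ℤ) < k →
      (bStep (rhombus k))^[2 * j] (⟨(a, 0), 0⟩, ⟨(a, 0), true⟩) =
        (⟨(a, (j : ℤ)), 0⟩, ⟨(a, (j : ℤ)), true⟩) ∧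
      (bStep (rhombus k))^[2 * j + 1] (⟨(a, 0), 0⟩, ⟨(a, 0), true⟩) =
        (⟨(a + 1, (j : ℤ)), 2⟩, ⟨(a, (j : ℤ)), false⟩) := by
  intro j
  induction j with
  | zero =>
      intro _
      constructor
      · simp
      · simpa using bt_step1 0
  | succ n ih =>
      intro hn
      have hn' : (n : ℤ) < k := by push_cast at hn ⊢; omega
      obtain ⟨ihe, iho⟩ := ih hn'
      have heven : (bStep (rhombus k))^[2 * (n + 1)] (⟨(a, 0), 0⟩, ⟨(a, 0), true⟩) =
          (⟨(a, ((n : ℤ) + 1)), 0⟩, ⟨(a, ((n : ℤ) + 1)), true⟩) := by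
        have h2 : 2 * (n + 1) = (2 * n + 1) + 1 := by ring
        rw [h2, Function.iterate_succ_apply', iho,
          bt_step2 (by positivity) (by push_cast at hn ⊢; omega)]
      constructor
      · push_cast
        exact heven
      · rw [Function.iterate_succ_apply', heven]
        push_cast
        exact bt_step1 _

lemma beam_bottom {k : ℕ} (hk : 1 ≤ k) {a : ℤ} (h0 : 0 ≤ a) (h1 : a < k) :
    BeamTo (rhombus k) ⟨(a, 0), 0⟩ ⟨(a, (k : ℤ)), 0⟩ := by
  have hstart : startCell (rhombus k) (⟨(a, 0), 0⟩ : TPane) = ⟨(a, 0), true⟩ := by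
    have hup : (⟨(a, 0), 0⟩ : TPane).upCell = ⟨(a, 0), true⟩ := by
      simp +decide [TPane.upCell]
    unfold startCell
    rw [hup, if_pos (mem_rhombus'.2 (by omega))]
  refine ⟨2 * k, by omega, boundary_dir0 ⟨h0, h1, Or.inr rfl⟩, ?_, ?_⟩
  · have h2 : 2 * k = (2 * (k - 1) + 1) + 1 := by omega
    rw [hstart, h2, Function.iterate_succ_apply',
      (iter_bt (k - 1) (by omega)).2,
      bStep_of_boundary (q := ⟨(a, (k : ℤ)), 0⟩) ?_ (boundary_dir0 ⟨h0, h1, Or.inr rfl⟩)]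
    · have : ((k : ℤ) - 1 : ℤ) + 1 = (k : ℤ) := by ring
      simp +decide [TCell.edge, Prod.ext_iff]
      push_cast
      omega
  · intro m hm hmk
    rw [hstart]
    rcases Nat.even_or_odd m with ⟨j, hj⟩ | ⟨j, hj⟩
    · have hjk : (j : ℤ) < k := by push_cast; omega
      rw [hj, show j + j = 2 * j from by ring, (iter_bt j hjk).1]
      exact not_boundary_dir0 (by omega)
    · have hjk : (j : ℤ) < k := by push_cast; omega
      rw [hj, (iter_bt j hjk).2]
      exact not_boundary_dir2 _


/-! ### Generic beam steps -/

lemma stepA {k : ℕ} {v w : ℤ} (h : v + 1 ≠ 0 ∧ v + 1 ≠ k) :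
    bStep (rhombus k) (⟨(v, w), 0⟩, ⟨(v, w - 1), false⟩) =
      (⟨(v + 1, w - 1), 1⟩, ⟨(v + 1, w - 1), true⟩) := by
  rw [bStep_of_not_boundary (q := ⟨(v + 1, w - 1), 1⟩)
    (by simp +decide [TCell.edge, Prod.ext_iff]) (not_boundary_dir1 (by omega))]
  simp +decide [nextCell, TPane.upCell, TPane.downCell, Prod.ext_iff]
  all_goals omega

lemma stepB {k : ℕ} {v w : ℤ} (h : ¬(0 ≤ v ∧ v < k ∧ (w = 0 ∨ w = k))) :
    bStep (rhombus k) (⟨(v, w), 1⟩, ⟨(v, w), true⟩) = (⟨(v, w), 0⟩, ⟨(v, w - 1), false⟩) := by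
  rw [bStep_of_not_boundary (q := ⟨(v, w), 0⟩)
    (by simp +decide [TCell.edge, Prod.ext_iff]) (not_boundary_dir0 h)]
  simp +decide [nextCell, TPane.upCell, TPane.downCell, Prod.ext_iff]
  all_goals omega

lemma stepC {k : ℕ} {v w : ℤ} :
    bStep (rhombus k) (⟨(v, w), 1⟩, ⟨(v - 1, w), false⟩) = (⟨(v, w), 2⟩, ⟨(v - 1, w), true⟩) := by
  rw [bStep_of_not_boundary (q := ⟨(v, w), 2⟩)
    (by simp +decide [TCell.edge, Prod.ext_iff]) (not_boundary_dir2 _)]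
  simp +decide [nextCell, TPane.upCell, TPane.downCell, Prod.ext_iff]
  all_goals omega

lemma stepD {k : ℕ} {v w : ℤ} (h : ¬(0 ≤ w ∧ w < k ∧ (v - 1 = 0 ∨ v - 1 = k))) :
    bStep (rhombus k) (⟨(v, w), 2⟩, ⟨(v - 1, w), true⟩) =
      (⟨(v - 1, w), 1⟩, ⟨(v - 2, w), false⟩) := by
  rw [bStep_of_not_boundary (q := ⟨(v - 1, w), 1⟩)
    (by simp +decide [TCell.edge, Prod.ext_iff]) (not_boundary_dir1 h)]
  simp +decide [nextCell, TPane.upCell, TPane.downCell, Prod.ext_iff]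
  all_goals omega

/-! ### Beam from a top pane -/

lemma iter_tp {k a : ℕ} (ha : a < k) :
    ∀ j : ℕ, 1 ≤ j → a + j < k →
      (bStep (rhombus k))^[2 * j - 1] (⟨((a : ℤ), (k : ℤ)), 0⟩, ⟨((a : ℤ), (k : ℤ) - 1), false⟩) =
        (⟨((a : ℤ) + j, (k : ℤ) - j), 1⟩, ⟨((a : ℤ) + j, (k : ℤ) - j), true⟩) ∧
      (bStep (rhombus k))^[2 * j] (⟨((a : ℤ), (k : ℤ)), 0⟩, ⟨((a : ℤ), (k : ℤ) - 1), false⟩) =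
        (⟨((a : ℤ) + j, (k : ℤ) - j), 0⟩, ⟨((a : ℤ) + j, (k : ℤ) - j - 1), false⟩) := by
  intro j
  induction j with
  | zero => omega
  | succ n ih =>
      intro _ hn
      rcases Nat.eq_zero_or_pos n with rfl | hn1
      · have hodd : (bStep (rhombus k))^[2 * 1 - 1]
            (⟨((a : ℤ), (k : ℤ)), 0⟩, ⟨((a : ℤ), (k : ℤ) - 1), false⟩) =
            (⟨((a : ℤ) + 1, (k : ℤ) - 1), 1⟩, ⟨((a : ℤ) + 1, (k : ℤ) - 1), true⟩) := by
          simpa using stepA (k := k) (v := (a : ℤ)) (w := (k : ℤ)) (by omega)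
        refine ⟨by simpa using hodd, ?_⟩
        have h2 : 2 * 1 = (2 * 1 - 1) + 1 := rfl
        rw [h2, Function.iterate_succ_apply', hodd, stepB (by omega)]
        push_cast; ring_nf
      · obtain ⟨-, ihe⟩ := ih hn1 (by omega)
        have hodd : (bStep (rhombus k))^[2 * (n + 1) - 1]
            (⟨((a : ℤ), (k : ℤ)), 0⟩, ⟨((a : ℤ), (k : ℤ) - 1), false⟩) =
            (⟨((a : ℤ) + (n + 1), (k : ℤ) - (n + 1)), 1⟩,
             ⟨((a : ℤ) + (n + 1), (k : ℤ) - (n + 1)), true⟩) := by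
          have h2 : 2 * (n + 1) - 1 = (2 * n) + 1 := by omega
          rw [h2, Function.iterate_succ_apply', ihe,
            stepA (v := (a : ℤ) + n) (w := (k : ℤ) - n) (by omega)]
          push_cast; ring_nf
        refine ⟨hodd, ?_⟩
        have h2 : 2 * (n + 1) = (2 * (n + 1) - 1) + 1 := by omega
        rw [h2, Function.iterate_succ_apply', hodd,
          stepB (v := (a : ℤ) + (n + 1)) (w := (k : ℤ) - (n + 1)) (by omega)]
        push_cast; ring_nf

lemma startCell_top {k a : ℕ} (ha : a < k) :
    startCell (rhombus k) (⟨((a : ℤ), (k : ℤ)), 0⟩ : TPane) = ⟨((a : ℤ), (k : ℤ) - 1), false⟩ := by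
  have hup : (⟨((a : ℤ), (k : ℤ)), 0⟩ : TPane).upCell = ⟨((a : ℤ), (k : ℤ)), true⟩ := by
    simp +decide [TPane.upCell]
  have hdn : (⟨((a : ℤ), (k : ℤ)), 0⟩ : TPane).downCell = ⟨((a : ℤ), (k : ℤ) - 1), false⟩ := by
    simp +decide [TPane.downCell, Prod.ext_iff]
  unfold startCell
  rw [hup, hdn, if_neg (by rw [mem_rhombus']; push_cast; omega)]

lemma beam_top {k a : ℕ} (ha : a < k) :
    BeamTo (rhombus k) ⟨((a : ℤ), (k : ℤ)), 0⟩ ⟨((k : ℤ), (a : ℤ)), 1⟩ := by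
  have hbd : IsBoundaryPane (rhombus k) ⟨((k : ℤ), (a : ℤ)), 1⟩ :=
    boundary_dir1 (by omega)
  refine ⟨2 * (k - a) - 1, by omega, hbd, ?_, ?_⟩
  · rw [startCell_top ha]
    rcases Nat.lt_or_ge (a + 1) k with hak | hak
    · have h2 : 2 * (k - a) - 1 = (2 * (k - a - 1)) + 1 := by omega
      rw [h2, Function.iterate_succ_apply',
        (iter_tp ha (k - a - 1) (by omega) (by omega)).2,
        bStep_of_boundary (q := ⟨((k : ℤ), (a : ℤ)), 1⟩) ?_ hbd]
      have e1 : (a : ℤ) + ((k : ℕ) - a - 1 : ℕ) + 1 = (k : ℤ) := by push_cast; omega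
      have e2 : (k : ℤ) - ((k : ℕ) - a - 1 : ℕ) - 1 = (a : ℤ) := by push_cast; omega
      simp +decide [TCell.edge, Prod.ext_iff]
      push_cast; omega
    · have hak' : a + 1 = k := by omega
      have h2 : 2 * (k - a) - 1 = 1 := by omega
      rw [h2, Function.iterate_one,
        bStep_of_boundary (q := ⟨((k : ℤ), (a : ℤ)), 1⟩) ?_ hbd]
      simp +decide [TCell.edge, Prod.ext_iff]
      push_cast; omega
  · intro m hm hmk
    rw [startCell_top ha]
    rcases Nat.even_or_odd m with ⟨j, hj⟩ | ⟨j, hj⟩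
    · have hj1 : 1 ≤ j := by omega
      have hjk : a + j < k := by omega
      rw [hj, show j + j = 2 * j from by ring, (iter_tp ha j hj1 hjk).2]
      exact not_boundary_dir0 (by omega)
    · have hj1 : 1 ≤ j + 1 := by omega
      have hjk : a + (j + 1) < k := by omega
      rw [hj, show 2 * j + 1 = 2 * (j + 1) - 1 from by omega, (iter_tp ha (j + 1) hj1 hjk).1]
      exact not_boundary_dir1 (by omega)

/-! ### Beam from a right pane -/

lemma iter_rt {k b : ℕ} (hb : b < k) :
    ∀ j : ℕ, j < k →
      (bStep (rhombus k))^[2 * j + 1] (⟨((k : ℤ), (b : ℤ)), 1⟩, ⟨((k : ℤ) - 1, (b : ℤ)), false⟩) =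
        (⟨((k : ℤ) - j, (b : ℤ)), 2⟩, ⟨((k : ℤ) - j - 1, (b : ℤ)), true⟩) ∧
      (1 ≤ j →
        (bStep (rhombus k))^[2 * j] (⟨((k : ℤ), (b : ℤ)), 1⟩, ⟨((k : ℤ) - 1, (b : ℤ)), false⟩) =
          (⟨((k : ℤ) - j, (b : ℤ)), 1⟩, ⟨((k : ℤ) - j - 1, (b : ℤ)), false⟩)) := by
  intro j
  induction j with
  | zero =>
      intro _
      refine ⟨?_, by omega⟩
      have := stepC (k := k) (v := (k : ℤ)) (w := (b : ℤ))
      simpa using this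
  | succ n ih =>
      intro hn
      obtain ⟨iho, -⟩ := ih (by omega)
      have heven : (bStep (rhombus k))^[2 * (n + 1)]
          (⟨((k : ℤ), (b : ℤ)), 1⟩, ⟨((k : ℤ) - 1, (b : ℤ)), false⟩) =
          (⟨((k : ℤ) - (n + 1), (b : ℤ)), 1⟩, ⟨((k : ℤ) - (n + 1) - 1, (b : ℤ)), false⟩) := by
        have h2 : 2 * (n + 1) = (2 * n + 1) + 1 := by ring
        rw [h2, Function.iterate_succ_apply', iho,
          stepD (v := (k : ℤ) - n) (w := (b : ℤ)) (by omega)]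
        push_cast; ring_nf
      refine ⟨?_, fun _ => heven⟩
      rw [Function.iterate_succ_apply', heven,
        stepC (v := (k : ℤ) - (n + 1)) (w := (b : ℤ))]
      push_cast; ring_nf

lemma startCell_right {k b : ℕ} (hb : b < k) :
    startCell (rhombus k) (⟨((k : ℤ), (b : ℤ)), 1⟩ : TPane) =
      ⟨((k : ℤ) - 1, (b : ℤ)), false⟩ := by
  have hup : (⟨((k : ℤ), (b : ℤ)), 1⟩ : TPane).upCell = ⟨((k : ℤ), (b : ℤ)), true⟩ := by
    simp +decide [TPane.upCell]
  have hdn : (⟨((k : ℤ), (b : ℤ)), 1⟩ : TPane).downCell = ⟨((k : ℤ) - 1, (b : ℤ)), false⟩ := by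
    simp +decide [TPane.downCell, Prod.ext_iff]
  unfold startCell
  rw [hup, hdn, if_neg (by rw [mem_rhombus']; push_cast; omega)]

lemma beam_right {k b : ℕ} (hb : b < k) :
    BeamTo (rhombus k) ⟨((k : ℤ), (b : ℤ)), 1⟩ ⟨(0, (b : ℤ)), 1⟩ := by
  have hbd : IsBoundaryPane (rhombus k) ⟨(0, (b : ℤ)), 1⟩ :=
    boundary_dir1 (by omega)
  refine ⟨2 * k, by omega, hbd, ?_, ?_⟩
  · rw [startCell_right hb]
    have h2 : 2 * k = (2 * (k - 1) + 1) + 1 := by omega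
    rw [h2, Function.iterate_succ_apply', (iter_rt hb (k - 1) (by omega)).1,
      bStep_of_boundary (q := ⟨(0, (b : ℤ)), 1⟩) ?_ hbd]
    have e1 : (k : ℤ) - ((k : ℕ) - 1 : ℕ) - 1 = 0 := by push_cast; omega
    simp +decide [TCell.edge, Prod.ext_iff]
    push_cast; omega
  · intro m hm hmk
    rw [startCell_right hb]
    rcases Nat.even_or_odd m with ⟨j, hj⟩ | ⟨j, hj⟩
    · have hj1 : 1 ≤ j := by omega
      have hjk : j < k := by omega
      rw [hj, show j + j = 2 * j from by ring, ((iter_rt hb j hjk).2 hj1)]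
      exact not_boundary_dir1 (by omega)
    · have hjk : j < k := by omega
      rw [hj, (iter_rt hb j hjk).1]
      exact not_boundary_dir2 _

/-! ### Beam from a left pane -/

lemma iter_lf {k b : ℕ} (hb : b < k) :
    ∀ j : ℕ, j < b →
      (bStep (rhombus k))^[2 * j + 1] (⟨(0, (b : ℤ)), 1⟩, ⟨(0, (b : ℤ)), true⟩) =
        (⟨((j : ℤ), (b : ℤ) - j), 0⟩, ⟨((j : ℤ), (b : ℤ) - j - 1), false⟩) ∧
      (bStep (rhombus k))^[2 * j + 2] (⟨(0, (b : ℤ)), 1⟩, ⟨(0, (b : ℤ)), true⟩) =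
        (⟨((j : ℤ) + 1, (b : ℤ) - j - 1), 1⟩, ⟨((j : ℤ) + 1, (b : ℤ) - j - 1), true⟩) := by
  intro j
  induction j with
  | zero =>
      intro hj
      have h1 : (bStep (rhombus k))^[2 * 0 + 1] (⟨(0, (b : ℤ)), 1⟩, ⟨(0, (b : ℤ)), true⟩) =
          (⟨((0 : ℤ), (b : ℤ)), 0⟩, ⟨((0 : ℤ), (b : ℤ) - 1), false⟩) := by
        simpa using stepB (k := k) (v := (0 : ℤ)) (w := (b : ℤ)) (by omega)
      refine ⟨by simpa using h1, ?_⟩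
      rw [show 2 * 0 + 2 = (2 * 0 + 1) + 1 from rfl, Function.iterate_succ_apply', h1,
        stepA (v := (0 : ℤ)) (w := (b : ℤ)) (by omega)]
      norm_num
  | succ n ih =>
      intro hn
      obtain ⟨-, ihe⟩ := ih (by omega)
      have hodd : (bStep (rhombus k))^[2 * (n + 1) + 1] (⟨(0, (b : ℤ)), 1⟩, ⟨(0, (b : ℤ)), true⟩) =
          (⟨((n : ℤ) + 1, (b : ℤ) - (n + 1)), 0⟩, ⟨((n : ℤ) + 1, (b : ℤ) - (n + 1) - 1), false⟩) := by
        have h2 : 2 * (n + 1) + 1 = (2 * n + 2) + 1 := by ring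
        rw [h2, Function.iterate_succ_apply', ihe,
          stepB (v := (n : ℤ) + 1) (w := (b : ℤ) - n - 1) (by omega)]
        push_cast; ring_nf
      refine ⟨by push_cast at hodd ⊢; exact hodd, ?_⟩
      rw [show 2 * (n + 1) + 2 = (2 * (n + 1) + 1) + 1 from rfl, Function.iterate_succ_apply',
        hodd, stepA (v := (n : ℤ) + 1) (w := (b : ℤ) - (n + 1)) (by omega)]
      push_cast; ring_nf

lemma startCell_left {k b : ℕ} (hb : b < k) :
    startCell (rhombus k) (⟨(0, (b : ℤ)), 1⟩ : TPane) = ⟨(0, (b : ℤ)), true⟩ := by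
  have hup : (⟨(0, (b : ℤ)), 1⟩ : TPane).upCell = ⟨(0, (b : ℤ)), true⟩ := by
    simp +decide [TPane.upCell]
  unfold startCell
  rw [hup, if_pos (mem_rhombus'.2 (by omega))]

lemma beam_left {k b : ℕ} (hk : 1 ≤ k) (hb : b < k) :
    BeamTo (rhombus k) ⟨(0, (b : ℤ)), 1⟩ ⟨((b : ℤ), 0), 0⟩ := by
  have hbd : IsBoundaryPane (rhombus k) ⟨((b : ℤ), 0), 0⟩ :=
    boundary_dir0 (by omega)
  refine ⟨2 * b + 1, by omega, hbd, ?_, ?_⟩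
  · rw [startCell_left hb]
    rcases Nat.eq_zero_or_pos b with rfl | hb1
    · rw [show 2 * 0 + 1 = 1 from rfl, Function.iterate_one,
        bStep_of_boundary (q := ⟨((0 : ℤ), 0), 0⟩) ?_ (by simpa using hbd)]
      · simp
      · simp +decide [TCell.edge, Prod.ext_iff]
    · have h2 : 2 * b + 1 = (2 * (b - 1) + 2) + 1 := by omega
      rw [h2, Function.iterate_succ_apply', (iter_lf hb (b - 1) (by omega)).2,
        bStep_of_boundary (q := ⟨((b : ℤ), 0), 0⟩) ?_ hbd]
      simp +decide [TCell.edge, Prod.ext_iff]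
      push_cast; omega
  · intro m hm hmk
    rw [startCell_left hb]
    rcases Nat.even_or_odd m with ⟨j, hj⟩ | ⟨j, hj⟩
    · have hj1 : 1 ≤ j := by omega
      have hjb : j - 1 < b := by omega
      rw [hj, show j + j = 2 * (j - 1) + 2 from by omega, (iter_lf hb (j - 1) hjb).2]
      exact not_boundary_dir1 (by omega)
    · have hjb : j < b := by omega
      rw [hj, (iter_lf hb j hjb).1]
      exact not_boundary_dir0 (by omega)

lemma beam_bottom' {k a : ℕ} (hk : 1 ≤ k) (ha : a < k) :
    BeamTo (rhombus k) ⟨((a : ℤ), 0), 0⟩ ⟨((a : ℤ), (k : ℤ)), 0⟩ :=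
  beam_bottom hk (by positivity) (by omega)


/-! ### The billiards permutation of the rhombus -/

lemma beamTo_unique {P : Finset TCell} {b c d : TPane} (h1 : BeamTo P b c)
    (h2 : BeamTo P b d) : c = d := by
  obtain ⟨m, hm0, hmc, hmeq, hmmin⟩ := h1
  obtain ⟨n, hn0, hnd, hneq, hnmin⟩ := h2
  rcases lt_trichotomy m n with h | h | h
  · exact absurd (hmeq ▸ hmc) (hnmin m hm0 h)
  · rw [← hmeq, ← hneq, h]
  · exact absurd (hneq ▸ hnd) (hmmin n hn0 h)

/-- The successor map of the rhombus billiards permutation, at the level of panes. -/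
def rnext (k : ℕ) (p : TPane) : TPane :=
  if p.dir = 0 then
    (if p.base.2 = 0 then ⟨(p.base.1, (k : ℤ)), 0⟩ else ⟨((k : ℤ), p.base.1), 1⟩)
  else (if p.base.1 = k then ⟨(0, p.base.2), 1⟩ else ⟨(p.base.2, 0), 0⟩)

/-- The predecessor map. -/
def rprev (k : ℕ) (p : TPane) : TPane :=
  if p.dir = 0 then
    (if p.base.2 = 0 then ⟨(0, p.base.1), 1⟩ else ⟨(p.base.1, 0), 0⟩)
  else (if p.base.1 = 0 then ⟨((k : ℤ), p.base.2), 1⟩ else ⟨(p.base.2, (k : ℤ)), 0⟩)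

lemma rnext_bt {k : ℕ} (a : ℤ) : rnext k ⟨(a, 0), 0⟩ = ⟨(a, (k : ℤ)), 0⟩ := by
  simp +decide [rnext]

lemma rnext_tp {k : ℕ} (hk : 1 ≤ k) (a : ℤ) :
    rnext k ⟨(a, (k : ℤ)), 0⟩ = ⟨((k : ℤ), a), 1⟩ := by
  simp +decide [rnext]
  omega

lemma rnext_rt {k : ℕ} (a : ℤ) : rnext k ⟨((k : ℤ), a), 1⟩ = ⟨(0, a), 1⟩ := by
  simp +decide [rnext]

lemma rnext_lf {k : ℕ} (hk : 1 ≤ k) (a : ℤ) : rnext k ⟨(0, a), 1⟩ = ⟨(a, 0), 0⟩ := by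
  simp +decide [rnext]
  omega

lemma rprev_bt {k : ℕ} (a : ℤ) : rprev k ⟨(a, 0), 0⟩ = ⟨(0, a), 1⟩ := by
  simp +decide [rprev]

lemma rprev_tp {k : ℕ} (hk : 1 ≤ k) (a : ℤ) :
    rprev k ⟨(a, (k : ℤ)), 0⟩ = ⟨(a, 0), 0⟩ := by
  simp +decide [rprev]
  omega

lemma rprev_rt {k : ℕ} (hk : 1 ≤ k) (a : ℤ) :
    rprev k ⟨((k : ℤ), a), 1⟩ = ⟨(a, (k : ℤ)), 0⟩ := by
  simp +decide [rprev]
  omega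

lemma rprev_lf {k : ℕ} (a : ℤ) : rprev k ⟨(0, a), 1⟩ = ⟨((k : ℤ), a), 1⟩ := by
  simp +decide [rprev]

/-- Case analysis principle for boundary panes of the rhombus. -/
lemma bset_cases {k : ℕ} {p : TPane} (hp : p ∈ Bset k)
    {motive : TPane → Prop}
    (hbt : ∀ a : ℤ, 0 ≤ a → a < k → motive ⟨(a, 0), 0⟩)
    (htp : ∀ a : ℤ, 0 ≤ a → a < k → motive ⟨(a, (k : ℤ)), 0⟩)
    (hrt : ∀ a : ℤ, 0 ≤ a → a < k → motive ⟨((k : ℤ), a), 1⟩)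
    (hlf : ∀ a : ℤ, 0 ≤ a → a < k → motive ⟨(0, a), 1⟩) : motive p := by
  rcases mem_Bset.1 hp with ⟨hd, h1, h2, h3 | h3⟩ | ⟨hd, h1, h2, h3 | h3⟩ <;>
    obtain ⟨⟨a, b⟩, d⟩ := p <;> simp only at hd h1 h2 h3 <;> subst hd <;> subst h3
  · exact hbt a h1 h2
  · exact htp a h1 h2
  · exact hlf b h1 h2
  · exact hrt b h1 h2

lemma rnext_mem {k : ℕ} (hk : 1 ≤ k) {p : TPane} (hp : p ∈ Bset k) : rnext k p ∈ Bset k := by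
  refine bset_cases hp (motive := fun q => rnext k q ∈ Bset k) ?_ ?_ ?_ ?_ <;> intro a h1 h2
  · rw [rnext_bt]; exact mem_Bset.2 (Or.inl ⟨rfl, h1, h2, Or.inr rfl⟩)
  · rw [rnext_tp hk]; exact mem_Bset.2 (Or.inr ⟨rfl, h1, h2, Or.inr rfl⟩)
  · rw [rnext_rt]; exact mem_Bset.2 (Or.inr ⟨rfl, h1, h2, Or.inl rfl⟩)
  · rw [rnext_lf hk]; exact mem_Bset.2 (Or.inl ⟨rfl, h1, h2, Or.inl rfl⟩)

lemma rprev_mem {k : ℕ} (hk : 1 ≤ k) {p : TPane} (hp : p ∈ Bset k) : rprev k p ∈ Bset k := by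
  refine bset_cases hp (motive := fun q => rprev k q ∈ Bset k) ?_ ?_ ?_ ?_ <;> intro a h1 h2
  · rw [rprev_bt]; exact mem_Bset.2 (Or.inr ⟨rfl, h1, h2, Or.inl rfl⟩)
  · rw [rprev_tp hk]; exact mem_Bset.2 (Or.inl ⟨rfl, h1, h2, Or.inl rfl⟩)
  · rw [rprev_rt hk]; exact mem_Bset.2 (Or.inl ⟨rfl, h1, h2, Or.inr rfl⟩)
  · rw [rprev_lf]; exact mem_Bset.2 (Or.inr ⟨rfl, h1, h2, Or.inr rfl⟩)

lemma rprev_rnext {k : ℕ} (hk : 1 ≤ k) {p : TPane} (hp : p ∈ Bset k) :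
    rprev k (rnext k p) = p := by
  refine bset_cases hp (motive := fun q => rprev k (rnext k q) = q) ?_ ?_ ?_ ?_ <;> intro a h1 h2
  · rw [rnext_bt, rprev_tp hk]
  · rw [rnext_tp hk, rprev_rt hk]
  · rw [rnext_rt, rprev_lf]
  · rw [rnext_lf hk, rprev_bt]

lemma rnext_rprev {k : ℕ} (hk : 1 ≤ k) {p : TPane} (hp : p ∈ Bset k) :
    rnext k (rprev k p) = p := by
  refine bset_cases hp (motive := fun q => rnext k (rprev k q) = q) ?_ ?_ ?_ ?_ <;> intro a h1 h2
  · rw [rprev_bt, rnext_lf hk]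
  · rw [rprev_tp hk, rnext_bt]
  · rw [rprev_rt hk, rnext_tp hk]
  · rw [rprev_lf, rnext_rt]

lemma rnext_four {k : ℕ} (hk : 1 ≤ k) {p : TPane} (hp : p ∈ Bset k) :
    rnext k (rnext k (rnext k (rnext k p))) = p := by
  refine bset_cases hp (motive := fun q => rnext k (rnext k (rnext k (rnext k q))) = q) ?_ ?_ ?_ ?_ <;> intro a h1 h2
  · rw [rnext_bt, rnext_tp hk, rnext_rt, rnext_lf hk]
  · rw [rnext_tp hk, rnext_rt, rnext_lf hk, rnext_bt]
  · rw [rnext_rt, rnext_lf hk, rnext_bt, rnext_tp hk]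
  · rw [rnext_lf hk, rnext_bt, rnext_tp hk, rnext_rt]

lemma rnext_orbit_distinct {k : ℕ} (hk : 1 ≤ k) {p : TPane} (hp : p ∈ Bset k) :
    p ≠ rnext k p ∧ p ≠ rnext k (rnext k p) ∧ p ≠ rnext k (rnext k (rnext k p)) ∧
    rnext k p ≠ rnext k (rnext k p) ∧ rnext k p ≠ rnext k (rnext k (rnext k p)) ∧
    rnext k (rnext k p) ≠ rnext k (rnext k (rnext k p)) := by
  refine bset_cases hp (motive := fun q =>
    q ≠ rnext k q ∧ q ≠ rnext k (rnext k q) ∧ q ≠ rnext k (rnext k (rnext k q)) ∧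
    rnext k q ≠ rnext k (rnext k q) ∧ rnext k q ≠ rnext k (rnext k (rnext k q)) ∧
    rnext k (rnext k q) ≠ rnext k (rnext k (rnext k q))) ?_ ?_ ?_ ?_ <;> intro a h1 h2
  · rw [rnext_bt, rnext_tp hk, rnext_rt]
    refine ⟨?_, ?_, ?_, ?_, ?_, ?_⟩ <;> simp +decide [TPane.mk.injEq, Prod.ext_iff] <;> omega
  · rw [rnext_tp hk, rnext_rt, rnext_lf hk]
    refine ⟨?_, ?_, ?_, ?_, ?_, ?_⟩ <;> simp +decide [TPane.mk.injEq, Prod.ext_iff] <;> omega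
  · rw [rnext_rt, rnext_lf hk, rnext_bt]
    refine ⟨?_, ?_, ?_, ?_, ?_, ?_⟩ <;> simp +decide [TPane.mk.injEq, Prod.ext_iff] <;> omega
  · rw [rnext_lf hk, rnext_bt, rnext_tp hk]
    refine ⟨?_, ?_, ?_, ?_, ?_, ?_⟩ <;> simp +decide [TPane.mk.injEq, Prod.ext_iff] <;> omega

lemma beam_rnext {k : ℕ} (hk : 1 ≤ k) {p : TPane} (hp : p ∈ Bset k) :
    BeamTo (rhombus k) p (rnext k p) := by
  refine bset_cases hp (motive := fun q => BeamTo (rhombus k) q (rnext k q)) ?_ ?_ ?_ ?_ <;> intro a h1 h2 <;>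
    obtain ⟨a', rfl⟩ : ∃ a' : ℕ, (a' : ℤ) = a := ⟨a.toNat, by omega⟩
  · rw [rnext_bt]; exact beam_bottom' hk (by omega)
  · rw [rnext_tp hk]; exact beam_top (by omega)
  · rw [rnext_rt]; exact beam_right (by omega)
  · rw [rnext_lf hk]; exact beam_left hk (by omega)

lemma mem_bset_of_mem_boundary' {k : ℕ} (hk : 1 ≤ k) {p : TPane}
    (hp : p ∈ boundaryPanes (rhombus k)) : p ∈ Bset k := by
  rw [← boundaryPanes_rhombus hk]; exact hp

lemma mem_boundary_of_mem_bset {k : ℕ} (hk : 1 ≤ k) {p : TPane} (hp : p ∈ Bset k) :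
    p ∈ boundaryPanes (rhombus k) := by
  rw [boundaryPanes_rhombus hk]; exact hp

/-- The billiards permutation of the rhombus. -/
def piStd (k : ℕ) (hk : 1 ≤ k) : Equiv.Perm ↥(boundaryPanes (rhombus k)) where
  toFun p := ⟨rnext k p.1,
    mem_boundary_of_mem_bset hk (rnext_mem hk (mem_bset_of_mem_boundary' hk p.2))⟩
  invFun p := ⟨rprev k p.1,
    mem_boundary_of_mem_bset hk (rprev_mem hk (mem_bset_of_mem_boundary' hk p.2))⟩
  left_inv p := Subtype.ext (rprev_rnext hk (mem_bset_of_mem_boundary' hk p.2))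
  right_inv p := Subtype.ext (rnext_rprev hk (mem_bset_of_mem_boundary' hk p.2))

lemma piStd_apply {k : ℕ} (hk : 1 ≤ k) (p : ↥(boundaryPanes (rhombus k))) :
    (piStd k hk p : TPane) = rnext k p.1 := rfl

lemma mem_bset_of_mem_boundary {k : ℕ} (hk : 1 ≤ k) (p : ↥(boundaryPanes (rhombus k))) :
    p.1 ∈ Bset k := mem_bset_of_mem_boundary' hk p.2

lemma isBilliards_piStd {k : ℕ} (hk : 1 ≤ k) : IsBilliards (rhombus k) (piStd k hk) :=
  fun b => beam_rnext hk (mem_bset_of_mem_boundary hk b)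

lemma billiards_eq_piStd {k : ℕ} (hk : 1 ≤ k) {π : Equiv.Perm ↥(boundaryPanes (rhombus k))}
    (hπ : IsBilliards (rhombus k) π) : π = piStd k hk :=
  Equiv.ext fun b => Subtype.ext (beamTo_unique (hπ b) (isBilliards_piStd hk b))

lemma piStd_pow_four {k : ℕ} (hk : 1 ≤ k) : (piStd k hk) ^ 4 = 1 := by
  ext b
  have h1 : ((piStd k hk) ^ 4) b = (piStd k hk) ((piStd k hk) ((piStd k hk) ((piStd k hk) b))) := by
    simp [pow_succ, Equiv.Perm.mul_apply]
  rw [h1]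
  exact congrArg Subtype.val (Subtype.ext (rnext_four hk (mem_bset_of_mem_boundary hk b)))

lemma orbit_of_pow_four {α : Type*} [Fintype α] [DecidableEq α] (π : Equiv.Perm α)
    (h4 : π ^ 4 = 1) (b : α) :
    (Finset.univ.filter fun c => π.SameCycle b c) =
      {b, π b, (π ^ 2) b, (π ^ 3) b} := by
  ext c
  simp only [Finset.mem_filter, Finset.mem_univ, true_and, Finset.mem_insert,
    Finset.mem_singleton]
  constructor
  · intro hc
    obtain ⟨i, -, -, hieq⟩ := hc.exists_pow_eq π
    have hmod : π ^ i = π ^ (i % 4) := by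
      conv_lhs => rw [← Nat.div_add_mod i 4]
      rw [pow_add, pow_mul, h4, one_pow, one_mul]
    have hieq' : (π ^ (i % 4)) b = c := by rw [← hmod]; exact hieq
    have hlt : i % 4 < 4 := Nat.mod_lt _ (by norm_num)
    set j := i % 4 with hj
    interval_cases j
    · exact Or.inl (by simpa using hieq'.symm)
    · exact Or.inr (Or.inl (by simpa using hieq'.symm))
    · exact Or.inr (Or.inr (Or.inl hieq'.symm))
    · exact Or.inr (Or.inr (Or.inr hieq'.symm))
  · rintro (rfl | rfl | rfl | rfl)
    · exact Equiv.Perm.SameCycle.refl _ _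
    · exact ⟨1, by simp⟩
    · exact ⟨(2 : ℤ), by rw [show ((2 : ℤ)) = ((2 : ℕ) : ℤ) from rfl, zpow_natCast]⟩
    · exact ⟨(3 : ℤ), by rw [show ((3 : ℤ)) = ((3 : ℕ) : ℤ) from rfl, zpow_natCast]⟩

lemma piStd_orbit_card {k : ℕ} (hk : 1 ≤ k) (b : ↥(boundaryPanes (rhombus k))) :
    (Finset.univ.filter fun c => (piStd k hk).SameCycle b c).card = 4 := by
  set π := piStd k hk with hπ
  rw [orbit_of_pow_four π (piStd_pow_four hk) b]
  have hmem := mem_bset_of_mem_boundary hk b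
  obtain ⟨d1, d2, d3, d4, d5, d6⟩ := rnext_orbit_distinct hk hmem
  have hv1 : ((π b : ↥(boundaryPanes (rhombus k))) : TPane) = rnext k b.1 := rfl
  have hv2 : (((π ^ 2) b : ↥(boundaryPanes (rhombus k))) : TPane) =
      rnext k (rnext k b.1) := by rw [pow_two, Equiv.Perm.mul_apply]; rfl
  have hv3 : (((π ^ 3) b : ↥(boundaryPanes (rhombus k))) : TPane) =
      rnext k (rnext k (rnext k b.1)) := by
    rw [pow_succ, pow_two, Equiv.Perm.mul_apply, Equiv.Perm.mul_apply]; rfl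
  have n1 : b ≠ π b := fun h => d1 (by rw [← hv1]; exact congrArg Subtype.val h)
  have n2 : b ≠ (π ^ 2) b := fun h => d2 (by rw [← hv2]; exact congrArg Subtype.val h)
  have n3 : b ≠ (π ^ 3) b := fun h => d3 (by rw [← hv3]; exact congrArg Subtype.val h)
  have n4 : π b ≠ (π ^ 2) b := fun h => d4 (by
    rw [← hv2, ← hv1]; exact congrArg Subtype.val h)
  have n5 : π b ≠ (π ^ 3) b := fun h => d5 (by
    rw [← hv3, ← hv1]; exact congrArg Subtype.val h)
  have n6 : (π ^ 2) b ≠ (π ^ 3) b := fun h => d6 (by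
    rw [← hv3, ← hv2]; exact congrArg Subtype.val h)
  rw [Finset.card_insert_of_notMem (by simp [n1, n2, n3]),
    Finset.card_insert_of_notMem (by simp [n4, n5]),
    Finset.card_insert_of_notMem (by simp [n6]), Finset.card_singleton]

lemma piStd_orbits_card_four {k : ℕ} (hk : 1 ≤ k) :
    ∀ s ∈ permOrbits (piStd k hk), s.card = 4 := by
  intro s hs
  obtain ⟨b, -, rfl⟩ := Finset.mem_image.1 hs
  exact piStd_orbit_card hk b

lemma cycCount_piStd {k : ℕ} (hk : 1 ≤ k) : cycCount (piStd k hk) = k := by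
  classical
  set π := piStd k hk with hπ
  have hdisj : ∀ s ∈ permOrbits π, ∀ t ∈ permOrbits π, s ≠ t → Disjoint s t := by
    intro s hs t ht hst
    obtain ⟨a, -, rfl⟩ := Finset.mem_image.1 hs
    obtain ⟨c, -, rfl⟩ := Finset.mem_image.1 ht
    rw [Finset.disjoint_left]
    intro x hx hx'
    simp only [Finset.mem_filter, Finset.mem_univ, true_and] at hx hx'
    refine hst ?_
    ext y
    simp only [Finset.mem_filter, Finset.mem_univ, true_and]
    constructor
    · intro hy; exact ((hx'.trans hx.symm).trans hy)
    · intro hy; exact ((hx.trans hx'.symm).trans hy)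
  have huniv : (permOrbits π).biUnion (fun s => s) = Finset.univ := by
    ext b
    simp only [Finset.mem_biUnion, Finset.mem_univ, iff_true]
    exact ⟨Finset.univ.filter fun c => π.SameCycle b c,
      Finset.mem_image.2 ⟨b, Finset.mem_univ _, rfl⟩,
      Finset.mem_filter.2 ⟨Finset.mem_univ _, Equiv.Perm.SameCycle.refl _ _⟩⟩
  have hcard : (Finset.univ : Finset ↥(boundaryPanes (rhombus k))).card =
      4 * (permOrbits π).card := by
    rw [← huniv, Finset.card_biUnion hdisj,
      Finset.sum_const_nat (m := 4) (fun s hs => piStd_orbits_card_four hk s hs), mul_comm]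
  have huc : (Finset.univ : Finset ↥(boundaryPanes (rhombus k))).card = 4 * k := by
    rw [Finset.card_univ, Fintype.card_coe, ← perim, perim_rhombus hk]
  rw [cycCount]
  omega


/-! ### Topology: the rhombus region is a disk -/

/-- Coordinates of a lattice point, before applying the lattice linear map. -/
def TP (v : GridV) : ℝ × ℝ := ((v.1 : ℝ), (v.2 : ℝ))

/-- The linear equivalence sending lattice coordinates to the plane. -/
noncomputable def Lmap : (ℝ × ℝ) ≃ₗ[ℝ] ℝ × ℝ where
  toFun p := (p.1 + p.2 / 2, p.2 * Real.sqrt 3 / 2)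
  invFun q := (q.1 - q.2 / Real.sqrt 3, 2 * q.2 / Real.sqrt 3)
  map_add' p q := by simp [Prod.ext_iff]; constructor <;> ring
  map_smul' c p := by simp [Prod.ext_iff]; constructor <;> ring
  left_inv p := by
    have h3 : Real.sqrt 3 ≠ 0 := by positivity
    simp only [Prod.ext_iff]
    constructor <;> field_simp <;> ring
  right_inv q := by
    have h3 : Real.sqrt 3 ≠ 0 := by positivity
    simp only [Prod.ext_iff]
    constructor <;> field_simp <;> ring

lemma toPlane_eq (v : GridV) : toPlane v = Lmap (TP v) := rfl

lemma region_eq (c : TCell) :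
    c.region = Lmap '' (convexHull ℝ (TP '' ↑c.vertices)) := by
  rw [TCell.region, Finset.coe_image]
  have h1 : toPlane '' ↑c.vertices = Lmap '' (TP '' ↑c.vertices) := by
    rw [← Set.image_comp]
    rfl
  rw [h1]
  exact (Lmap.toLinearMap.image_convexHull (TP '' ↑c.vertices)).symm

/-- The union of the cells of the rhombus, in lattice coordinates. -/
lemma hull_union_eq {k : ℕ} (hk : 1 ≤ k) :
    (⋃ c ∈ rhombus k, convexHull ℝ (TP '' ↑c.vertices)) =
      Set.Icc (0 : ℝ) k ×ˢ Set.Icc (0 : ℝ) k := by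
  apply Set.Subset.antisymm
  · refine Set.iUnion₂_subset fun c hc => ?_
    refine convexHull_min ?_ ((convex_Icc _ _).prod (convex_Icc _ _))
    rintro - ⟨v, hv, rfl⟩
    obtain ⟨h1, h2, h3, h4⟩ := mem_rhombus.1 hc
    obtain ⟨⟨a, b⟩, u⟩ := c
    simp only at h1 h2 h3 h4
    have hbounds : 0 ≤ v.1 ∧ v.1 ≤ (k : ℤ) ∧ 0 ≤ v.2 ∧ v.2 ≤ (k : ℤ) := by
      cases u <;> simp [TCell.vertices] at hv <;>
        rcases hv with rfl | rfl | rfl <;> simp <;> omega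
    refine ⟨⟨?_, ?_⟩, ?_, ?_⟩ <;> simp only [TP, Set.mem_Icc]
    · exact_mod_cast hbounds.1
    · exact_mod_cast hbounds.2.1
    · exact_mod_cast hbounds.2.2.1
    · exact_mod_cast hbounds.2.2.2
  · rintro ⟨x, y⟩ ⟨⟨hx0, hxk⟩, hy0, hyk⟩
    set az : ℤ := ⌊x⌋ ⊓ ((k : ℤ) - 1) with haz
    set bz : ℤ := ⌊y⌋ ⊓ ((k : ℤ) - 1) with hbz
    have haz0 : 0 ≤ az := le_min (Int.floor_nonneg.2 hx0) (by omega)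
    have hazk : az < k := by omega
    have hbz0 : 0 ≤ bz := le_min (Int.floor_nonneg.2 hy0) (by omega)
    have hbzk : bz < k := by omega
    have hax : (az : ℝ) ≤ x := by
      refine le_trans ?_ (Int.floor_le x)
      exact_mod_cast min_le_left _ _
    have hby : (bz : ℝ) ≤ y := by
      refine le_trans ?_ (Int.floor_le y)
      exact_mod_cast min_le_left _ _
    have hxa : x ≤ (az : ℝ) + 1 := by
      rcases le_or_gt ⌊x⌋ ((k : ℤ) - 1) with h | h
      · have : az = ⌊x⌋ := min_eq_left h
        rw [this]
        exact le_of_lt (Int.lt_floor_add_one x)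
      · have h1 : az = (k : ℤ) - 1 := min_eq_right (le_of_lt h)
        have h2 : ((k : ℤ) : ℝ) ≤ x := by
          refine le_trans ?_ (Int.floor_le x)
          exact_mod_cast (by omega : (k : ℤ) ≤ ⌊x⌋)
        rw [h1]
        push_cast
        push_cast at h2
        linarith
    have hyb : y ≤ (bz : ℝ) + 1 := by
      rcases le_or_gt ⌊y⌋ ((k : ℤ) - 1) with h | h
      · have : bz = ⌊y⌋ := min_eq_left h
        rw [this]
        exact le_of_lt (Int.lt_floor_add_one y)
      · have h1 : bz = (k : ℤ) - 1 := min_eq_right (le_of_lt h)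
        have h2 : ((k : ℤ) : ℝ) ≤ y := by
          refine le_trans ?_ (Int.floor_le y)
          exact_mod_cast (by omega : (k : ℤ) ≤ ⌊y⌋)
        rw [h1]
        push_cast
        push_cast at h2
        linarith
    simp only [Set.mem_iUnion]
    rcases le_or_gt (x - az + (y - bz)) 1 with hcase | hcase
    · refine ⟨⟨(az, bz), true⟩, mem_rhombus'.2 ⟨haz0, hazk, hbz0, hbzk⟩, ?_⟩
      have hsum : ∑ i : Fin 3, (![1 - (x - az) - (y - bz), x - az, y - bz]) i = 1 := by
        simp [Fin.sum_univ_three]; ring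
      have := Finset.centerMass_mem_convexHull (Finset.univ : Finset (Fin 3))
        (s := TP '' ↑((⟨(az, bz), true⟩ : TCell).vertices))
        (w := ![1 - (x - az) - (y - bz), x - az, y - bz])
        (z := ![((az : ℝ), (bz : ℝ)), ((az : ℝ) + 1, (bz : ℝ)), ((az : ℝ), (bz : ℝ) + 1)])
        (by intro i _; fin_cases i <;> simp <;> linarith)
        (by rw [hsum]; norm_num) ?_
      · convert this using 1
        rw [Finset.centerMass_eq_of_sum_1 _ _ hsum]
        simp [Fin.sum_univ_three, Prod.ext_iff, Prod.smul_mk]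
        constructor <;> ring
      · intro i _
        fin_cases i
        · exact ⟨(az, bz), by simp [TCell.vertices], rfl⟩
        · exact ⟨(az + 1, bz), by simp [TCell.vertices, Prod.ext_iff], by
            simp [TP, Prod.ext_iff]⟩
        · exact ⟨(az, bz + 1), by simp [TCell.vertices, Prod.ext_iff], by
            simp [TP, Prod.ext_iff]⟩
    · refine ⟨⟨(az, bz), false⟩, mem_rhombus'.2 ⟨haz0, hazk, hbz0, hbzk⟩, ?_⟩
      have hsum : ∑ i : Fin 3,
          (![1 - (y - bz), 1 - (x - az), (x - az) + (y - bz) - 1]) i = 1 := by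
        simp [Fin.sum_univ_three]; ring
      have := Finset.centerMass_mem_convexHull (Finset.univ : Finset (Fin 3))
        (s := TP '' ↑((⟨(az, bz), false⟩ : TCell).vertices))
        (w := ![1 - (y - bz), 1 - (x - az), (x - az) + (y - bz) - 1])
        (z := ![((az : ℝ) + 1, (bz : ℝ)), ((az : ℝ), (bz : ℝ) + 1),
          ((az : ℝ) + 1, (bz : ℝ) + 1)])
        (by intro i _; fin_cases i <;> simp <;> linarith)
        (by rw [hsum]; norm_num) ?_
      · convert this using 1
        rw [Finset.centerMass_eq_of_sum_1 _ _ hsum]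
        simp [Fin.sum_univ_three, Prod.ext_iff, Prod.smul_mk]
        constructor <;> ring
      · intro i _
        fin_cases i
        · exact ⟨(az + 1, bz), by simp [TCell.vertices, Prod.ext_iff], by
            simp [TP, Prod.ext_iff]⟩
        · exact ⟨(az, bz + 1), by simp [TCell.vertices, Prod.ext_iff], by
            simp [TP, Prod.ext_iff]⟩
        · exact ⟨(az + 1, bz + 1), by simp [TCell.vertices, Prod.ext_iff], by
            simp [TP, Prod.ext_iff]⟩

lemma polyRegion_rhombus {k : ℕ} (hk : 1 ≤ k) :
    polyRegion (rhombus k) = Lmap '' (Set.Icc (0 : ℝ) k ×ˢ Set.Icc (0 : ℝ) k) := by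
  rw [polyRegion, ← hull_union_eq hk]
  rw [Set.image_iUnion₂]
  exact Set.iUnion₂_congr fun c hc => region_eq c

noncomputable def LmapHomeo : (ℝ × ℝ) ≃ₜ (ℝ × ℝ) := Lmap.toContinuousLinearEquiv.toHomeomorph

lemma LmapHomeo_coe : ⇑LmapHomeo = ⇑Lmap := rfl

lemma rhombus_disk {k : ℕ} (hk : 1 ≤ k) :
    Nonempty (↥(polyRegion (rhombus k)) ≃ₜ ↥(Metric.closedBall (0 : ℝ × ℝ) 1)) := by
  have hk0 : (0 : ℝ) < k := by exact_mod_cast hk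
  set S : Set (ℝ × ℝ) := Set.Icc (0 : ℝ) k ×ˢ Set.Icc (0 : ℝ) k with hS
  have e1 : ↥(polyRegion (rhombus k)) ≃ₜ ↥(⇑LmapHomeo '' S) :=
    Homeomorph.setCongr (by rw [polyRegion_rhombus hk, LmapHomeo_coe])
  have e2 : ↥(⇑LmapHomeo '' S) ≃ₜ ↥S := (Homeomorph.image LmapHomeo S).symm
  have e3 : ↥S ≃ₜ ↥(Set.Icc (0 : ℝ) k) × ↥(Set.Icc (0 : ℝ) k) := Homeomorph.Set.prod _ _
  have hne : (2 / (k : ℝ)) ≠ 0 := by positivity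
  have himg : (affineHomeomorph (2 / (k : ℝ)) (-1) hne) '' Set.Icc (0 : ℝ) k =
      Set.Icc (-1 : ℝ) 1 := by
    rw [affineHomeomorph_image_Icc _ _ _ _ (by positivity)]
    have : 2 / (k : ℝ) * k = 2 := by field_simp
    rw [this]
    norm_num
  have e4 : ↥(Set.Icc (0 : ℝ) k) ≃ₜ ↥(Metric.closedBall (0 : ℝ) 1) :=
    (Homeomorph.image (affineHomeomorph (2 / (k : ℝ)) (-1) hne) (Set.Icc (0 : ℝ) k)).trans
      (Homeomorph.setCongr (by rw [himg, Real.closedBall_eq_Icc]; norm_num))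
  have e5 : ↥(Metric.closedBall (0 : ℝ) 1) × ↥(Metric.closedBall (0 : ℝ) 1) ≃ₜ
      ↥(Metric.closedBall (0 : ℝ × ℝ) 1) :=
    (Homeomorph.Set.prod _ _).symm.trans (Homeomorph.setCongr (by
      rw [closedBall_prod_same]
      rfl))
  exact ⟨e1.trans (e2.trans (e3.trans ((e4.prodCongr e4).trans e5)))⟩

/-- **Theorem.**  For every `k ≥ 1`, the rhombus of side length `k` is a simple grid polygon
of perimeter `4k` whose billiards permutation consists of exactly `k` cycles, each of
length 4; in particular `cyc = k = ⌊(perim + 2)/4⌋`. -/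
theorem rhombus_perim_and_cycles (k : ℕ) (hk : 1 ≤ k) :
    IsSimpleGridPolygon (rhombus k) ∧ perim (rhombus k) = 4 * k ∧
    (∃ π : Equiv.Perm ↥(boundaryPanes (rhombus k)), IsBilliards (rhombus k) π) ∧
    ∀ π : Equiv.Perm ↥(boundaryPanes (rhombus k)), IsBilliards (rhombus k) π →
      cycCount π = k ∧ (∀ s ∈ permOrbits π, s.card = 4) ∧
      cycCount π = (perim (rhombus k) + 2) / 4 := by
  refine ⟨⟨⟨⟨(0, 0), true⟩, mem_rhombus'.2 (by omega)⟩, rhombus_disk hk⟩,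
    perim_rhombus hk, ⟨piStd k hk, isBilliards_piStd hk⟩, ?_⟩
  intro π hπ
  rw [billiards_eq_piStd hk hπ]
  refine ⟨cycCount_piStd hk, piStd_orbits_card_four hk, ?_⟩
  rw [cycCount_piStd hk, perim_rhombus hk]
  omega

end
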